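/- Define φ : ℝ → ℝ by φ(t) = −(1 + e^{2t})^{−1/2}. Then the function t ↦ 2·(φ(t)³ − φ(t))² is integrable on ℝ and ∫_{−∞}^{∞} 2·(φ(t)³ − φ(t))² dt = 1/2. -/

import Mathlib

open Real MeasureTheory Set Filter Topology

noncomputable def gg (t : ℝ) : ℝ := 2 * Real.exp (2*t) ^ 2 / (1 + Real.exp (2*t)) ^ 3

noncomputable def FF (t : ℝ) : ℝ :=
  -(1 + Real.exp (2*t))⁻¹ + (1/2) * ((1 + Real.exp (2*t)) ^ 2)⁻¹

lemma ha (t : ℝ) : (0:ℝ) < 1 + Real.exp (2*t) := by positivity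

lemma hF (t : ℝ) : HasDerivAt FF (gg t) t := by
  have he : HasDerivAt (fun t : ℝ => Real.exp (2*t)) (Real.exp (2*t) * 2) t := by
    simpa using (HasDerivAt.exp (by simpa using (hasDerivAt_id t).const_mul (2:ℝ)))
  have hh : HasDerivAt (fun t : ℝ => 1 + Real.exp (2*t)) (Real.exp (2*t) * 2) t :=
    he.const_add 1
  have h0 : (1 + Real.exp (2*t)) ≠ 0 := (ha t).ne'
  have h1 : HasDerivAt (fun t : ℝ => (1 + Real.exp (2*t))⁻¹)
      (-(Real.exp (2*t) * 2) / (1 + Real.exp (2*t)) ^ 2) t := hh.inv h0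
  have h2 : HasDerivAt (fun t : ℝ => ((1 + Real.exp (2*t)) ^ 2)⁻¹)
      (-((2 : ℕ) * (1 + Real.exp (2*t)) ^ (2-1) * (Real.exp (2*t) * 2)) /
        ((1 + Real.exp (2*t)) ^ 2) ^ 2) t := (hh.pow 2).inv (pow_ne_zero 2 h0)
  have := (h1.neg).add (h2.const_mul (1/2))
  exact this.congr_deriv (by unfold gg; field_simp; ring)

lemma tends_exp_bot : Tendsto (fun t : ℝ => Real.exp (2*t)) atBot (𝓝 0) :=
  Real.tendsto_exp_atBot.comp (tendsto_atBot_atBot.mpr fun b => ⟨b/2, fun a hab => by linarith⟩)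

lemma tends_exp_top : Tendsto (fun t : ℝ => Real.exp (2*t)) atTop atTop :=
  Real.tendsto_exp_atTop.comp (tendsto_atTop_atTop.mpr fun b => ⟨b/2, fun a hab => by linarith⟩)

lemma hFbot : Tendsto FF atBot (𝓝 (-(1/2) : ℝ)) := by
  have h1 : Tendsto (fun t : ℝ => 1 + Real.exp (2*t)) atBot (𝓝 1) := by
    simpa using tends_exp_bot.const_add 1
  have := ((h1.inv₀ one_ne_zero).neg).add (((h1.pow 2).inv₀ (by norm_num)).const_mul (1/2))
  simpa using by norm_num at this ⊢; convert this using 2 <;> norm_num [FF]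

lemma hFtop : Tendsto FF atTop (𝓝 (0 : ℝ)) := by
  have h1 : Tendsto (fun t : ℝ => 1 + Real.exp (2*t)) atTop atTop :=
    tendsto_atTop_add_const_left _ 1 tends_exp_top
  have h2 := tendsto_inv_atTop_zero.comp h1
  have h3 : Tendsto (fun t : ℝ => ((1 + Real.exp (2*t)) ^ 2)⁻¹) atTop (𝓝 (0:ℝ)) := by
    have := (h2.pow 2)
    simpa [← inv_pow, Function.comp] using this
  have := (h2.neg).add (h3.const_mul (1/2))
  have h4 : Tendsto FF atTop (𝓝 (-0 + 1/2 * 0 : ℝ)) := by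
    apply this.congr
    intro t
    simp [FF, Function.comp]
  simpa using h4

lemma hg_int : Integrable gg := by
  have hcont : Continuous gg := by
    apply Continuous.div
    · continuity
    · continuity
    · intro t; positivity
  rw [← integrableOn_univ, ← Set.Iic_union_Ioi (a := (0:ℝ))]
  apply IntegrableOn.union
  · apply Integrable.mono' ((integrableOn_exp_Iic 0).const_mul 2)
      hcont.aestronglyMeasurable.restrict
    filter_upwards [ae_restrict_mem measurableSet_Iic] with t ht
    rw [Real.norm_eq_abs, abs_of_nonneg (by unfold gg; positivity)]
    simp only [Set.mem_Iic] at ht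
    have h1 : Real.exp (2*t) ^ 2 ≤ Real.exp t := by
      rw [← Real.exp_nat_mul]
      exact Real.exp_le_exp.mpr (by push_cast; linarith)
    have h2 : (1:ℝ) ≤ (1 + Real.exp (2*t)) ^ 3 := by
      have h := Real.exp_pos (2*t)
      nlinarith [sq_nonneg (Real.exp (2*t)), sq_nonneg (1 + Real.exp (2*t))]
    unfold gg
    calc 2 * Real.exp (2*t) ^ 2 / (1 + Real.exp (2*t)) ^ 3
        ≤ 2 * Real.exp (2*t) ^ 2 / 1 :=
          (div_le_div_iff_of_pos_left (by positivity) (by positivity) one_pos).mpr h2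
      _ ≤ 2 * Real.exp t := by rw [div_one]; linarith
  · apply Integrable.mono' ((exp_neg_integrableOn_Ioi 0 (b := 1) one_pos).const_mul 2)
      hcont.aestronglyMeasurable.restrict
    filter_upwards [ae_restrict_mem measurableSet_Ioi] with t ht
    rw [Real.norm_eq_abs, abs_of_nonneg (by unfold gg; positivity)]
    simp only [Set.mem_Ioi] at ht
    have h2 : Real.exp (2*t) ^ 3 ≤ (1 + Real.exp (2*t)) ^ 3 := by
      apply pow_le_pow_left₀ (Real.exp_pos _).le (by linarith)
    have h3 : (0:ℝ) < Real.exp (2*t) ^ 3 := by positivity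
    unfold gg
    calc 2 * Real.exp (2*t) ^ 2 / (1 + Real.exp (2*t)) ^ 3
        ≤ 2 * Real.exp (2*t) ^ 2 / Real.exp (2*t) ^ 3 :=
          (div_le_div_iff_of_pos_left (by positivity) (by positivity) h3).mpr h2
      _ = 2 * Real.exp (-(2*t)) := by
          rw [Real.exp_neg]
          rw [show Real.exp (2*t) ^ 3 = Real.exp (2*t) ^ 2 * Real.exp (2*t) by ring]
          rw [mul_div_assoc, div_mul_cancel_left₀ (by positivity)]
      _ ≤ 2 * Real.exp (-1*t) := by
          have : Real.exp (-(2*t)) ≤ Real.exp (-1*t) := Real.exp_le_exp.mpr (by linarith)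
          linarith

lemma key (φ : ℝ → ℝ)
    (hφ : ∀ t, φ t = -((1 + Real.exp (2 * t)) ^ (-(1 / 2) : ℝ))) (t : ℝ) :
    2 * ((φ t) ^ 3 - φ t) ^ 2 = gg t := by
  have hpos := ha t
  have hφ3 : (φ t) ^ 3 = -((1 + Real.exp (2*t)) ^ (-(3/2) : ℝ)) := by
    rw [hφ t]
    rw [Odd.neg_pow ⟨1, by norm_num⟩]
    rw [← Real.rpow_natCast ((1 + Real.exp (2*t)) ^ (-(1/2):ℝ)) 3,
        ← Real.rpow_mul hpos.le]
    norm_num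
  have hsplit : (1 + Real.exp (2*t)) ^ (-(1/2) : ℝ)
      = (1 + Real.exp (2*t)) ^ (-(3/2) : ℝ) * (1 + Real.exp (2*t)) := by
    rw [show (1 + Real.exp (2*t)) ^ (-(3/2):ℝ) * (1 + Real.exp (2*t))
        = (1 + Real.exp (2*t)) ^ ((-(3/2):ℝ) + 1) by rw [Real.rpow_add hpos, Real.rpow_one]]
    norm_num
  rw [hφ3, hφ t, hsplit]
  have h3 : ((1 + Real.exp (2*t)) ^ (-(3/2) : ℝ)) ^ 2
      = ((1 + Real.exp (2*t)) ^ 3)⁻¹ := by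
    rw [← Real.rpow_natCast ((1 + Real.exp (2*t)) ^ (-(3/2):ℝ)) 2,
        ← Real.rpow_mul hpos.le]
    rw [show (-(3/2):ℝ) * (2:ℕ) = -((3:ℕ):ℝ) by norm_num]
    rw [Real.rpow_neg hpos.le, Real.rpow_natCast]
  unfold gg
  have : -((1 + Real.exp (2*t)) ^ (-(3/2):ℝ)) - -((1 + Real.exp (2*t)) ^ (-(3/2):ℝ) * (1 + Real.exp (2*t)))
      = (1 + Real.exp (2*t)) ^ (-(3/2):ℝ) * Real.exp (2*t) := by ring
  rw [this, mul_pow, h3]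
  field_simp

/-- The action of the optimal noise along the optimal path: with
`φ(t) = −(1 + e^{2t})^{−1/2}`, the function `t ↦ 2(φ(t)³ − φ(t))²` is integrable on `ℝ`
and `∫_{−∞}^{∞} 2(φ(t)³ − φ(t))² dt = 1/2`. -/
theorem stmt12 (φ : ℝ → ℝ)
    (hφ : ∀ t, φ t = -((1 + Real.exp (2 * t)) ^ (-(1 / 2) : ℝ))) :
    MeasureTheory.Integrable (fun t => 2 * ((φ t) ^ 3 - φ t) ^ 2) ∧
    ∫ t : ℝ, 2 * ((φ t) ^ 3 - φ t) ^ 2 = 1 / 2 := by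
  have heq : (fun t => 2 * ((φ t) ^ 3 - φ t) ^ 2) = gg := funext (key φ hφ)
  rw [heq]
  refine ⟨hg_int, ?_⟩
  rw [MeasureTheory.integral_of_hasDerivAt_of_tendsto hF hg_int hFbot hFtop]
  norm_num
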